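/- arXiv:2308.10353 — 3 statements merged into one kernel-verified Lean document; each statement's English description precedes it below -/
import Mathlib

section
/- Let X be a metric measure space and Γ a family of rectifiable curves in X. If AM(Γ) = 0, then there exists a sequence (ρ_i) of nonnegative Borel functions on X with sup_i ∫_X ρ_i dμ < ∞ such that for every curve γ ∈ Γ, liminf_{i→∞} ∫_γ ρ_i ds = ∞. -/
open MeasureTheory Filter Set Metric
open scoped ENNReal NNReal Topology

noncomputable section

namespace BVAMPaper

/-- A nonconstant compact rectifiable curve in `X`, parametrized by arclength on `[0, len]`. -/
structure Curve (X : Type*) [MetricSpace X] : Type _ where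
  len : ℝ
  len_pos : 0 < len
  toFun : ℝ → X
  lip : LipschitzOnWith 1 toFun (Set.Icc 0 len)
  nonconst : ∃ s ∈ Set.Icc (0:ℝ) len, ∃ t ∈ Set.Icc (0:ℝ) len, toFun s ≠ toFun t

variable {X : Type*} [MetricSpace X]

/-- The line integral `∫_γ ρ ds` of `ρ` over the arclength-parametrized curve `γ`. -/
def Curve.integral (γ : Curve X) (ρ : X → ℝ≥0∞) : ℝ≥0∞ :=
  ∫⁻ t in Set.Icc 0 γ.len, ρ (γ.toFun t)

/-- The line integral of `ρ` over the subcurve `γ|_{[s,t]}`. -/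
def Curve.integralOn (γ : Curve X) (s t : ℝ) (ρ : X → ℝ≥0∞) : ℝ≥0∞ :=
  ∫⁻ r in Set.Icc s t, ρ (γ.toFun r)

variable [MeasurableSpace X]

/-- The 1-modulus of a family of curves. -/
def Mod1 (μ : Measure X) (Γ : Set (Curve X)) : ℝ≥0∞ :=
  ⨅ (ρ : X → ℝ≥0∞) (_ : Measurable ρ ∧ ∀ γ ∈ Γ, 1 ≤ Curve.integral γ ρ), ∫⁻ x, ρ x ∂μ

/-- A sequence admissible for the AM-modulus of `Γ`. -/
def AMAdmissible (Γ : Set (Curve X)) (ρ : ℕ → X → ℝ≥0∞) : Prop :=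
  (∀ i, Measurable (ρ i)) ∧
    ∀ γ ∈ Γ, 1 ≤ Filter.atTop.liminf fun i => Curve.integral γ (ρ i)

/-- The AM-modulus of a family of curves. -/
def AM (μ : Measure X) (Γ : Set (Curve X)) : ℝ≥0∞ :=
  ⨅ (ρ : ℕ → X → ℝ≥0∞) (_ : AMAdmissible Γ ρ),
    Filter.atTop.liminf fun i => ∫⁻ x, ρ i x ∂μ

section Target
variable {Y : Type*} [EMetricSpace Y]

/-- `g` is an upper gradient of `u`. -/
def IsUpperGradient (u : X → Y) (g : X → ℝ≥0∞) : Prop :=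
  ∀ γ : Curve X, edist (u (γ.toFun γ.len)) (u (γ.toFun 0)) ≤ Curve.integral γ g

/-- `(ρ i)` is an AM-bounding sequence for `u` relative to the set `U`. -/
def AMBoundingOn (μ : Measure X) (U : Set X) (u : X → Y) (ρ : ℕ → X → ℝ≥0∞) : Prop :=
  (∀ i, Measurable (ρ i)) ∧
    ∃ Γ : Set (Curve X), AM μ Γ = 0 ∧
      ∀ γ : Curve X, γ ∉ Γ → (∀ r ∈ Set.Icc (0:ℝ) γ.len, γ.toFun r ∈ U) →
        ∃ N : Set ℝ, volume N = 0 ∧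
          ∀ s t : ℝ, s ∈ Set.Icc (0:ℝ) γ.len → t ∈ Set.Icc (0:ℝ) γ.len →
            s ∉ N → t ∉ N → s < t →
              edist (u (γ.toFun s)) (u (γ.toFun t)) ≤
                Filter.atTop.liminf fun i => Curve.integralOn γ s t (ρ i)

/-- `(ρ i)` is an AM-bounding sequence for `u`. -/
def AMBounding (μ : Measure X) (u : X → Y) (ρ : ℕ → X → ℝ≥0∞) : Prop :=
  AMBoundingOn μ Set.univ u ρ

/-- A strong bounding sequence: the bounding inequality holds along every nonconstant
compact rectifiable curve, with no exceptional curve family. -/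
def StrongBounding (u : X → Y) (ρ : ℕ → X → ℝ≥0∞) : Prop :=
  (∀ i, Measurable (ρ i)) ∧
    ∀ γ : Curve X, ∃ N : Set ℝ, volume N = 0 ∧
      ∀ s t : ℝ, s ∈ Set.Icc (0:ℝ) γ.len → t ∈ Set.Icc (0:ℝ) γ.len →
        s ∉ N → t ∉ N → s < t →
          edist (u (γ.toFun s)) (u (γ.toFun t)) ≤
            Filter.atTop.liminf fun i => Curve.integralOn γ s t (ρ i)

/-- The AM-BV energy of `u` relative to the set `U`. -/
def DAMOn (μ : Measure X) (u : X → Y) (U : Set X) : ℝ≥0∞ :=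
  ⨅ (ρ : ℕ → X → ℝ≥0∞) (_ : AMBoundingOn μ U u ρ),
    Filter.atTop.liminf fun i => ∫⁻ x in U, ρ i x ∂μ

/-- The total AM-BV energy `‖D_AM u‖(X)`. -/
def DAM (μ : Measure X) (u : X → Y) : ℝ≥0∞ := DAMOn μ u Set.univ

/-- `‖D_AM u‖(A)` for a general set `A`, via approximation by open supersets. -/
def DAMmeas (μ : Measure X) (u : X → Y) (A : Set X) : ℝ≥0∞ :=
  ⨅ (U : Set X) (_ : IsOpen U ∧ A ⊆ U), DAMOn μ u U

/-- `u ∈ L¹(X : Y)`. -/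
def MemL1 (μ : Measure X) (u : X → Y) : Prop :=
  AEStronglyMeasurable u μ ∧ ∃ y₀ : Y, ∫⁻ x, edist (u x) y₀ ∂μ < ∞

/-- `u ∈ BV_AM(X : Y)`. -/
def MemBVAM (μ : Measure X) (u : X → Y) : Prop :=
  MemL1 μ u ∧ ∃ ρ : ℕ → X → ℝ≥0∞, AMBounding μ u ρ ∧
    (Filter.atTop.liminf fun i => ∫⁻ x, ρ i x ∂μ) < ∞

/-- `u ∈ N^{1,1}(X : Y)`. -/
def MemN11 (μ : Measure X) (u : X → Y) : Prop :=
  MemL1 μ u ∧ ∃ g : X → ℝ≥0∞, Measurable g ∧ IsUpperGradient u g ∧ ∫⁻ x, g x ∂μ < ∞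

/-- The relaxed BV energy `‖Du‖(X)` of `u`, via approximation in `L¹` by
Newton–Sobolev maps with their upper gradients. -/
def DBV (μ : Measure X) (u : X → Y) : ℝ≥0∞ :=
  ⨅ (v : ℕ → X → Y) (g : ℕ → X → ℝ≥0∞)
    (_ : (∀ k, MemL1 μ (v k) ∧ Measurable (g k) ∧ IsUpperGradient (v k) (g k)) ∧
        Tendsto (fun k => ∫⁻ x, edist (v k x) (u x) ∂μ) atTop (nhds 0)),
    Filter.atTop.liminf fun k => ∫⁻ x, g k x ∂μ

/-- `u ∈ BV(X : Y)` via relaxation. -/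
def MemBV (μ : Measure X) (u : X → Y) : Prop := MemL1 μ u ∧ DBV μ u < ∞

/-- The pointwise (upper) Lipschitz constant function. -/
def lipDeriv (u : X → Y) (x : X) : ℝ≥0∞ :=
  Filter.limsup (fun y => edist (u y) (u x) / edist y x) (𝓝[≠] x)

end Target

/-- `μ` is a doubling measure with constant `Cd`. -/
def Doubling (μ : Measure X) (Cd : ℝ≥0) : Prop :=
  ∀ (x : X) (r : ℝ), 0 < r →
    0 < μ (ball x r) ∧ μ (ball x (2 * r)) ≤ Cd * μ (ball x r) ∧ μ (ball x (2 * r)) < ∞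

/-- `X` supports a 1-Poincaré inequality with constants `C`, `lam`. -/
def Poincare (μ : Measure X) (C lam : ℝ) : Prop :=
  ∀ (f : X → ℝ) (g : X → ℝ≥0∞), LocallyIntegrable f μ → Measurable g → IsUpperGradient f g →
    ∀ (x : X) (r : ℝ), 0 < r →
      (μ (ball x r))⁻¹ * ∫⁻ y in ball x r, (‖f y - ⨍ z in ball x r, f z ∂μ‖₊ : ℝ≥0∞) ∂μ ≤
        ENNReal.ofReal (C * r) *
          ((μ (ball x (lam * r)))⁻¹ * ∫⁻ y in ball x (lam * r), g y ∂μ)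

/-- `X` supports an AM-Poincaré inequality for `V`-valued maps. -/
def AMPoincare (μ : Measure X) (V : Type*) [NormedAddCommGroup V] [NormedSpace ℝ V]
    (C lam : ℝ) : Prop :=
  ∀ (u : X → V) (ρ : ℕ → X → ℝ≥0∞), MemBVAM μ u → AMBounding μ u ρ →
    ∀ (x : X) (r : ℝ), 0 < r →
      (μ (ball x r))⁻¹ * ∫⁻ y in ball x r, (‖u y - ⨍ z in ball x r, u z ∂μ‖₊ : ℝ≥0∞) ∂μ ≤
        ENNReal.ofReal (C * r) *
          Filter.atTop.liminf fun i =>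
            (μ (ball x (lam * r)))⁻¹ * ∫⁻ y in ball x (lam * r), ρ i y ∂μ

section MetricTarget
variable {Y : Type*} [MetricSpace Y]

/-- `u` is approximately continuous at `x`. -/
def ApproxCont (μ : Measure X) (u : X → Y) (x : X) : Prop :=
  ∃ y : Y, ∀ ε : ℝ, 0 < ε →
    Filter.limsup (fun r => μ (ball x r \ u ⁻¹' ball y ε) / μ (ball x r)) (𝓝[>] (0:ℝ)) = 0

/-- The jump set of `u`: points where `u` fails to be approximately continuous. -/
def jumpSet (μ : Measure X) (u : X → Y) : Set X := {x | ¬ ApproxCont μ u x}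

end MetricTarget

/-- The codimension-one Hausdorff measure of `A` relative to `μ`. -/
def codimOne (μ : Measure X) (A : Set X) : ℝ≥0∞ :=
  ⨆ (δ : ℝ) (_ : 0 < δ),
    ⨅ (c : ℕ → X) (r : ℕ → ℝ)
      (_ : (∀ i, 0 < r i ∧ r i ≤ δ) ∧ A ⊆ ⋃ i, ball (c i) (r i)),
      ∑' i, μ (ball (c i) (r i)) / ENNReal.ofReal (r i)


private lemma aux_le_liminf_add (u v : ℕ → ℝ≥0∞) :
    Filter.atTop.liminf u + Filter.atTop.liminf v ≤
      Filter.atTop.liminf fun j => u j + v j := by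
  set A := Filter.atTop.liminf u with hA
  set B := Filter.atTop.liminf v with hB
  set C := Filter.atTop.liminf (fun j => u j + v j) with hC
  have hAC : A ≤ C :=
    Filter.liminf_le_liminf (Filter.Eventually.of_forall fun j => le_self_add)
  have hBC : B ≤ C :=
    Filter.liminf_le_liminf (Filter.Eventually.of_forall fun j => le_add_self)
  refine ENNReal.le_of_forall_pos_le_add fun ε hε hCtop => ?_
  have hAtop : A ≠ ⊤ := fun hh => absurd (hh ▸ hAC) (by simp [hCtop.ne])
  have hBtop : B ≠ ⊤ := fun hh => absurd (hh ▸ hBC) (by simp [hCtop.ne])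
  set δ : ℝ≥0 := ε / 2 with hδ
  have hδ0 : δ ≠ 0 := by
    simp [hδ]
    exact hε.ne'
  have hevA : ∀ᶠ j in Filter.atTop, A - δ ≤ u j := by
    rcases eq_or_ne A 0 with h0 | h0
    · exact Filter.Eventually.of_forall fun j => by simp [h0]
    · exact (Filter.eventually_lt_of_lt_liminf
        (ENNReal.sub_lt_self hAtop h0 (by exact_mod_cast hδ0))).mono
        fun j hj => hj.le
  have hevB : ∀ᶠ j in Filter.atTop, B - δ ≤ v j := by
    rcases eq_or_ne B 0 with h0 | h0
    · exact Filter.Eventually.of_forall fun j => by simp [h0]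
    · exact (Filter.eventually_lt_of_lt_liminf
        (ENNReal.sub_lt_self hBtop h0 (by exact_mod_cast hδ0))).mono
        fun j hj => hj.le
  have hle : (A - δ) + (B - δ) ≤ C :=
    Filter.le_liminf_of_le (by isBoundedDefault)
      ((hevA.and hevB).mono fun j hj => add_le_add hj.1 hj.2)
  calc A + B ≤ ((A - δ) + δ) + ((B - δ) + δ) := add_le_add le_tsub_add le_tsub_add
    _ = ((A - δ) + (B - δ)) + ((δ : ℝ≥0∞) + δ) := by ring
    _ ≤ C + ε := by
        refine add_le_add hle ?_
        rw [show ((δ : ℝ≥0∞) + δ) = ((δ + δ : ℝ≥0) : ℝ≥0∞) by push_cast; ring]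
        rw [hδ, add_halves]

private lemma aux_sum_liminf_le {m : ℕ} (f : ℕ → ℕ → ℝ≥0∞) :
    ∑ k ∈ Finset.range m, Filter.atTop.liminf (f k) ≤
      Filter.atTop.liminf fun j => ∑ k ∈ Finset.range m, f k j := by
  induction m with
  | zero => simp
  | succ n ih =>
    simp only [Finset.sum_range_succ]
    calc ∑ k ∈ Finset.range n, Filter.atTop.liminf (f k) + Filter.atTop.liminf (f n)
        ≤ (Filter.atTop.liminf fun j => ∑ k ∈ Finset.range n, f k j)
            + Filter.atTop.liminf (f n) := add_le_add ih le_rfl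
      _ ≤ _ := aux_le_liminf_add _ _

private lemma aux_sum_lintegral_le {α : Type*} [MeasurableSpace α] (ν : Measure α)
    (m : ℕ) (f : ℕ → α → ℝ≥0∞) :
    ∑ k ∈ Finset.range m, ∫⁻ x, f k x ∂ν ≤ ∫⁻ x, ∑ k ∈ Finset.range m, f k x ∂ν := by
  induction m with
  | zero => simp
  | succ n ih =>
    simp only [Finset.sum_range_succ]
    calc ∑ k ∈ Finset.range n, (∫⁻ x, f k x ∂ν) + ∫⁻ x, f n x ∂ν
        ≤ (∫⁻ x, ∑ k ∈ Finset.range n, f k x ∂ν) + ∫⁻ x, f n x ∂ν :=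
          add_le_add ih le_rfl
      _ ≤ _ := MeasureTheory.le_lintegral_add _ _

/-- If `AM(Γ) = 0`, there is a sequence of nonnegative Borel functions with uniformly bounded
integrals whose line integrals blow up along every curve of `Γ`. -/
theorem statement0 {X : Type*} [MetricSpace X] [MeasurableSpace X] (μ : Measure X)
    (Γ : Set (Curve X)) (h : AM μ Γ = 0) :
    ∃ ρ : ℕ → X → ℝ≥0∞, (∀ i, Measurable (ρ i)) ∧
      (⨆ i, ∫⁻ x, ρ i x ∂μ) < ∞ ∧
      ∀ γ ∈ Γ, (Filter.atTop.liminf fun i => Curve.integral γ (ρ i)) = ∞ := by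
  -- Step 1: for each k, an admissible sequence with small integral liminf
  have key : ∀ k : ℕ, ∃ ρk : ℕ → X → ℝ≥0∞, AMAdmissible Γ ρk ∧
      (Filter.atTop.liminf fun i => ∫⁻ x, ρk i x ∂μ) < (2:ℝ≥0∞)⁻¹ ^ k := by
    intro k
    have h2 : AM μ Γ < (2:ℝ≥0∞)⁻¹ ^ k := by
      rw [h]
      exact ENNReal.pow_pos (by simp) k
    rw [AM, iInf_lt_iff] at h2
    obtain ⟨ρk, h3⟩ := h2
    rw [iInf_lt_iff] at h3
    obtain ⟨hadm, h4⟩ := h3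
    exact ⟨ρk, hadm, h4⟩
  choose ρ0 hadm hsmall using key
  -- Step 2: extract subsequences with small integrals along every index
  have key2 : ∀ k : ℕ, ∃ φ : ℕ → ℕ, StrictMono φ ∧
      ∀ j, (∫⁻ x, ρ0 k (φ j) x ∂μ) < (2:ℝ≥0∞)⁻¹ ^ k := by
    intro k
    exact Filter.extraction_of_frequently_atTop
      (Filter.frequently_lt_of_liminf_lt (by isBoundedDefault) (hsmall k))
  choose φ hφmono hφ using key2
  -- the new sequence
  refine ⟨fun j x => ∑ k ∈ Finset.range (j + 1), ρ0 k (φ k j) x, ?_, ?_, ?_⟩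
  · intro j
    exact Finset.measurable_sum _ fun k _ => (hadm k).1 (φ k j)
  · refine lt_of_le_of_lt (iSup_le fun j => ?_) (by norm_num : (2:ℝ≥0∞) < ∞)
    rw [lintegral_finset_sum _ fun k _ => (hadm k).1 (φ k j)]
    calc ∑ k ∈ Finset.range (j + 1), ∫⁻ x, ρ0 k (φ k j) x ∂μ
        ≤ ∑ k ∈ Finset.range (j + 1), (2:ℝ≥0∞)⁻¹ ^ k :=
          Finset.sum_le_sum fun k _ => (hφ k j).le
      _ ≤ ∑' k : ℕ, (2:ℝ≥0∞)⁻¹ ^ k := ENNReal.sum_le_tsum _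
      _ = (1 - 2⁻¹)⁻¹ := ENNReal.tsum_geometric _
      _ = 2 := by
          rw [show (1 : ℝ≥0∞) - 2⁻¹ = 2⁻¹ by
            rw [ENNReal.sub_eq_of_eq_add (by simp)]
            rw [ENNReal.inv_two_add_inv_two]]
          simp [inv_inv]
  · intro γ hγ
    -- along each subsequence, curve integrals have liminf ≥ 1
    have hsub : ∀ k : ℕ, (1 : ℝ≥0∞) ≤
        Filter.atTop.liminf fun j => Curve.integral γ (ρ0 k (φ k j)) := by
      intro k
      refine le_trans ((hadm k).2 γ hγ) ?_
      have hmap : Filter.map (φ k) Filter.atTop ≤ Filter.atTop :=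
        (hφmono k).tendsto_atTop
      calc Filter.atTop.liminf (fun i => Curve.integral γ (ρ0 k i))
          ≤ (Filter.map (φ k) Filter.atTop).liminf
              (fun i => Curve.integral γ (ρ0 k i)) :=
            Filter.liminf_le_liminf_of_le hmap
        _ = _ := (Filter.liminf_comp _ _ _).symm
    -- liminf of the sums is infinite
    by_contra hne
    obtain ⟨m, hm⟩ := ENNReal.exists_nat_gt (hne :
      (Filter.atTop.liminf fun j => Curve.integral γ fun x =>
          ∑ k ∈ Finset.range (j + 1), ρ0 k (φ k j) x) ≠ ⊤)
    -- show liminf ≥ m, contradiction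
    have hstep : ∀ j, m ≤ j + 1 →
        (∑ k ∈ Finset.range m, Curve.integral γ (fun x => ρ0 k (φ k j) x))
          ≤ Curve.integral γ fun x => ∑ k ∈ Finset.range (j + 1), ρ0 k (φ k j) x := by
      intro j hj
      have hsubset : Finset.range m ⊆ Finset.range (j + 1) := Finset.range_subset_range.mpr hj
      calc ∑ k ∈ Finset.range m, Curve.integral γ (fun x => ρ0 k (φ k j) x)
          ≤ Curve.integral γ fun x => ∑ k ∈ Finset.range m, ρ0 k (φ k j) x :=
            aux_sum_lintegral_le _ m (fun k t => ρ0 k (φ k j) (γ.toFun t))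
        _ ≤ _ := lintegral_mono fun t => Finset.sum_le_sum_of_subset hsubset
    have hge : (m : ℝ≥0∞) ≤ Filter.atTop.liminf
        fun j => Curve.integral γ fun x =>
          ∑ k ∈ Finset.range (j + 1), ρ0 k (φ k j) x := by
      calc (m : ℝ≥0∞) = ∑ k ∈ Finset.range m, 1 := by simp
        _ ≤ ∑ k ∈ Finset.range m, Filter.atTop.liminf
              (fun j => Curve.integral γ (fun x => ρ0 k (φ k j) x)) :=
            Finset.sum_le_sum fun k _ => hsub k
        _ ≤ Filter.atTop.liminf (fun j => ∑ k ∈ Finset.range m,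
              Curve.integral γ (fun x => ρ0 k (φ k j) x)) :=
            aux_sum_liminf_le _
        _ ≤ _ := by
            refine Filter.liminf_le_liminf ?_
            filter_upwards [Filter.eventually_ge_atTop m] with j hj
            exact hstep j (hj.trans (Nat.le_succ j))
    exact absurd (hge.trans_lt hm) (lt_irrefl _)

end BVAMPaper
end
end

section
/- Suppose (ρ_i) is an AM-bounding sequence for u : X → V with sup_i ∫_X ρ_i dμ < ∞. Then for each ε > 0 there is a strong bounding sequence (g_i) for u (i.e., the AM-bounding inequality holds along every nonconstant compact rectifiable curve, with no exceptional curve family) such that ∫_X |g_i − ρ_i| dμ < ε for each i. -/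
open MeasureTheory Filter Set Metric
open scoped ENNReal NNReal Topology

noncomputable section

namespace BVAMPaper

variable {X : Type*} [MetricSpace X]

variable [MeasurableSpace X]

/-! ### Auxiliary lemmas -/

lemma aux_liminf_superadd (u v : ℕ → ℝ≥0∞) :
    atTop.liminf u + atTop.liminf v ≤ atTop.liminf (fun i => u i + v i) := by
  rw [Filter.liminf_eq_iSup_iInf_of_nat, Filter.liminf_eq_iSup_iInf_of_nat,
    Filter.liminf_eq_iSup_iInf_of_nat]
  have hmono : ∀ w : ℕ → ℝ≥0∞, Monotone (fun n => ⨅ i ≥ n, w i) := by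
    intro w n m hnm
    exact le_iInf₂ fun i hi => iInf₂_le i (hnm.trans hi)
  rw [ENNReal.iSup_add_iSup_of_monotone (hmono u) (hmono v)]
  refine iSup_mono fun n => ?_
  refine le_iInf₂ fun i hi => ?_
  exact add_le_add (iInf₂_le i hi) (iInf₂_le i hi)

lemma aux_liminf_sum (m : ℕ) (w : ℕ → ℕ → ℝ≥0∞) :
    ∑ k ∈ Finset.range m, atTop.liminf (w k) ≤
      atTop.liminf (fun i => ∑ k ∈ Finset.range m, w k i) := by
  induction m with
  | zero => simp
  | succ m ih =>
    rw [Finset.sum_range_succ]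
    calc ∑ k ∈ Finset.range m, atTop.liminf (w k) + atTop.liminf (w m)
        ≤ atTop.liminf (fun i => ∑ k ∈ Finset.range m, w k i) + atTop.liminf (w m) :=
          add_le_add_left ih _
      _ ≤ atTop.liminf (fun i => (∑ k ∈ Finset.range m, w k i) + w m i) :=
          aux_liminf_superadd _ _
      _ = atTop.liminf (fun i => ∑ k ∈ Finset.range (m+1), w k i) := by
          simp [Finset.sum_range_succ]

lemma aux_liminf_subseq (u : ℕ → ℝ≥0∞) (φ : ℕ → ℕ) (hφ : StrictMono φ) :
    atTop.liminf u ≤ atTop.liminf (fun i => u (φ i)) := by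
  rw [Filter.liminf_eq_iSup_iInf_of_nat, Filter.liminf_eq_iSup_iInf_of_nat]
  refine iSup_mono fun n => le_iInf₂ fun i hi => ?_
  exact iInf₂_le (φ i) (hi.trans (hφ.le_apply))

lemma aux_lintegral_Icc_add (f : ℝ → ℝ≥0∞) {s x y : ℝ} (h1 : s ≤ x) (h2 : x ≤ y) :
    (∫⁻ r in Icc s x, f r) + (∫⁻ r in Icc x y, f r) = ∫⁻ r in Icc s y, f r := by
  have e1 : (∫⁻ r in Icc s x, f r) = ∫⁻ r in Ioc s x, f r :=
    (setLIntegral_congr (Ioc_ae_eq_Icc (μ := volume))).symm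
  have e2 : (∫⁻ r in Icc x y, f r) = ∫⁻ r in Ioc x y, f r :=
    (setLIntegral_congr (Ioc_ae_eq_Icc (μ := volume))).symm
  have e3 : (∫⁻ r in Icc s y, f r) = ∫⁻ r in Ioc s y, f r :=
    (setLIntegral_congr (Ioc_ae_eq_Icc (μ := volume))).symm
  rw [e1, e2, e3, ← Set.Ioc_union_Ioc_eq_Ioc h1 h2]
  have hdisj : Disjoint (Ioc s x) (Ioc x y) :=
    Set.disjoint_left.mpr (fun r (hr : r ∈ Ioc s x) (hr' : r ∈ Ioc x y) =>
      absurd hr'.1 (not_lt.mpr hr.2))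
  exact (lintegral_union measurableSet_Ioc hdisj).symm

lemma aux_lintegral_translate (f : ℝ → ℝ≥0∞) (a s t : ℝ) :
    ∫⁻ r in Icc s t, f (r + a) = ∫⁻ r in Icc (s + a) (t + a), f r := by
  have h1 : ∫⁻ r in Icc s t, f (r + a)
      = ∫⁻ r, (Icc (s + a) (t + a)).indicator f (r + a) := by
    rw [← lintegral_indicator measurableSet_Icc]
    refine lintegral_congr fun r => ?_
    by_cases hr : r ∈ Icc s t
    · rw [Set.indicator_of_mem hr, Set.indicator_of_mem]
      exact ⟨add_le_add_left hr.1 a, add_le_add_left hr.2 a⟩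
    · rw [Set.indicator_of_notMem hr, Set.indicator_of_notMem]
      intro hmem
      exact hr ⟨le_of_add_le_add_right hmem.1, le_of_add_le_add_right hmem.2⟩
  rw [h1, ← lintegral_indicator measurableSet_Icc]
  exact ((measurePreserving_add_right volume a).lintegral_map_equiv
    ((Icc (s+a) (t+a)).indicator f) (MeasurableEquiv.addRight a)).symm

lemma aux_null_translate {N : Set ℝ} (h : volume N = 0) (a : ℝ) :
    volume {x : ℝ | x - a ∈ N} = 0 := by
  obtain ⟨M, hNM, hMmeas, hM0⟩ := exists_measurable_superset_of_null h
  have hsub : {x : ℝ | x - a ∈ N} ⊆ (fun x : ℝ => x - a) ⁻¹' M := fun x hx => hNM hx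
  have hpre : volume ((fun x : ℝ => x - a) ⁻¹' M) = volume M :=
    (measurePreserving_sub_right volume a).measure_preimage hMmeas.nullMeasurableSet
  exact measure_mono_null hsub (hpre.trans hM0)

lemma aux_am_null {X : Type*} [MetricSpace X] [MeasurableSpace X] (μ : Measure X)
    {Γ : Set (Curve X)} (hΓ : AM μ Γ = 0) {c : ℝ≥0∞} (hc : 0 < c) :
    ∃ h : ℕ → X → ℝ≥0∞, (∀ i, Measurable (h i)) ∧ (∀ i, ∫⁻ x, h i x ∂μ ≤ c) ∧
      ∀ γ ∈ Γ, atTop.liminf (fun i => Curve.integral γ (h i)) = ⊤ := by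
  classical
  set δ : ℕ → ℝ≥0∞ := fun k => c * 2⁻¹ ^ (k + 1) with hδdef
  have hδpos : ∀ k, 0 < δ k := by
    intro k
    exact ENNReal.mul_pos hc.ne'
      (pow_ne_zero _ (ENNReal.inv_ne_zero.mpr (by norm_num)))
  have H : ∀ k : ℕ, ∃ σ : ℕ → X → ℝ≥0∞, AMAdmissible Γ σ ∧
      (atTop.liminf fun i => ∫⁻ x, σ i x ∂μ) < δ k := by
    intro k
    have h0 : AM μ Γ < δ k := by rw [hΓ]; exact hδpos k
    rw [AM, iInf_lt_iff] at h0
    obtain ⟨σ, hσ⟩ := h0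
    rw [iInf_lt_iff] at hσ
    obtain ⟨hadm, hlt⟩ := hσ
    exact ⟨σ, hadm, hlt⟩
  choose σ hadm hlt using H
  have Hext : ∀ k : ℕ, ∃ φ : ℕ → ℕ, StrictMono φ ∧
      ∀ i, (∫⁻ x, σ k (φ i) x ∂μ) < δ k := by
    intro k
    exact extraction_of_frequently_atTop (frequently_lt_of_liminf_lt (h := hlt k))
  choose φ hφmono hφlt using Hext
  refine ⟨fun i x => ∑' k, σ k (φ k i) x, ?_, ?_, ?_⟩
  · intro i
    exact Measurable.ennreal_tsum (fun k => (hadm k).1 (φ k i))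
  · intro i
    rw [lintegral_tsum (fun k => ((hadm k).1 (φ k i)).aemeasurable)]
    calc ∑' k, ∫⁻ x, σ k (φ k i) x ∂μ ≤ ∑' k, δ k :=
          ENNReal.tsum_le_tsum (fun k => (hφlt k i).le)
      _ = c := by
          rw [hδdef]
          simp only [pow_succ]
          rw [ENNReal.tsum_mul_left]
          rw [ENNReal.tsum_mul_right, ENNReal.tsum_geometric, ENNReal.one_sub_inv_two]
          rw [inv_inv, ENNReal.mul_inv_cancel (by norm_num) (by norm_num), mul_one]
  · intro γ hγ
    by_contra hne
    obtain ⟨m, hm⟩ := ENNReal.exists_nat_gt hne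
    have key : (m : ℝ≥0∞) ≤ atTop.liminf
        fun i => Curve.integral γ (fun x => ∑' k, σ k (φ k i) x) := by
      have step1 : ∀ i, ∑ k ∈ Finset.range m, Curve.integral γ (σ k (φ k i)) ≤
          Curve.integral γ (fun x => ∑' k, σ k (φ k i) x) := by
        intro i
        have hsum : ∀ (F : Finset ℕ),
            ∑ k ∈ F, Curve.integral γ (σ k (φ k i)) ≤
              Curve.integral γ (fun x => ∑ k ∈ F, σ k (φ k i) x) := by
          intro F
          induction F using Finset.induction with
          | empty => simp [Curve.integral]
          | @insert a F' hx ih =>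
            rw [Finset.sum_insert hx]
            calc Curve.integral γ (σ a (φ a i)) + ∑ k ∈ F', Curve.integral γ (σ k (φ k i))
                ≤ Curve.integral γ (σ a (φ a i)) +
                    Curve.integral γ (fun x => ∑ k ∈ F', σ k (φ k i) x) := add_le_add_right ih _
              _ ≤ Curve.integral γ (fun x => σ a (φ a i) x + ∑ k ∈ F', σ k (φ k i) x) :=
                  le_lintegral_add _ _
              _ = Curve.integral γ (fun x => ∑ k ∈ insert a F', σ k (φ k i) x) := by
                  simp [Finset.sum_insert hx]
        calc ∑ k ∈ Finset.range m, Curve.integral γ (σ k (φ k i))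
            ≤ Curve.integral γ (fun x => ∑ k ∈ Finset.range m, σ k (φ k i) x) :=
              hsum (Finset.range m)
          _ ≤ Curve.integral γ (fun x => ∑' k, σ k (φ k i) x) :=
              lintegral_mono (fun r => ENNReal.sum_le_tsum _)
      calc (m : ℝ≥0∞) = ∑ _k ∈ Finset.range m, 1 := by simp
        _ ≤ ∑ k ∈ Finset.range m, atTop.liminf (fun i => Curve.integral γ (σ k (φ k i))) := by
            refine Finset.sum_le_sum fun k _ => ?_
            calc (1:ℝ≥0∞) ≤ atTop.liminf fun i => Curve.integral γ (σ k i) := (hadm k).2 γ hγ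
              _ ≤ atTop.liminf fun i => Curve.integral γ (σ k (φ k i)) :=
                  aux_liminf_subseq _ _ (hφmono k)
        _ ≤ atTop.liminf (fun i => ∑ k ∈ Finset.range m, Curve.integral γ (σ k (φ k i))) :=
            aux_liminf_sum m _
        _ ≤ atTop.liminf fun i => Curve.integral γ (fun x => ∑' k, σ k (φ k i) x) :=
            liminf_le_liminf (Eventually.of_forall step1)
    exact absurd (key.trans_lt hm) (lt_irrefl _)

/-- The subcurve of `γ` on `[a, b]`, reparametrized to `[0, b-a]`. -/
def subCurve {X : Type*} [MetricSpace X] (γ : Curve X) (a b : ℝ)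
    (h0 : 0 ≤ a) (hab : a < b) (hbL : b ≤ γ.len)
    (hnc : ∃ x ∈ Icc a b, ∃ y ∈ Icc a b, γ.toFun x ≠ γ.toFun y) : Curve X where
  len := b - a
  len_pos := sub_pos.mpr hab
  toFun := fun r => γ.toFun (r + a)
  lip := by
    intro x hx y hy
    have hx' : x + a ∈ Icc 0 γ.len :=
      ⟨by have := hx.1; linarith, by have := hx.2; linarith⟩
    have hy' : y + a ∈ Icc 0 γ.len :=
      ⟨by have := hy.1; linarith, by have := hy.2; linarith⟩
    calc edist (γ.toFun (x + a)) (γ.toFun (y + a)) ≤ 1 * edist (x + a) (y + a) :=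
          γ.lip hx' hy'
      _ = 1 * edist x y := by rw [edist_add_right]
  nonconst := by
    obtain ⟨x, hx, y, hy, hxy⟩ := hnc
    refine ⟨x - a, ⟨sub_nonneg.mpr hx.1, sub_le_sub_right hx.2 a⟩,
      y - a, ⟨sub_nonneg.mpr hy.1, sub_le_sub_right hy.2 a⟩, ?_⟩
    simpa [sub_add_cancel] using hxy

lemma subCurve_integral {X : Type*} [MetricSpace X] (γ : Curve X) (a b : ℝ)
    (h0 : 0 ≤ a) (hab : a < b) (hbL : b ≤ γ.len)
    (hnc : ∃ x ∈ Icc a b, ∃ y ∈ Icc a b, γ.toFun x ≠ γ.toFun y) (ρ : X → ℝ≥0∞) :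
    Curve.integral (subCurve γ a b h0 hab hbL hnc) ρ = ∫⁻ r in Icc a b, ρ (γ.toFun r) := by
  show ∫⁻ r in Icc 0 (b - a), (fun z => ρ (γ.toFun z)) (r + a) = _
  rw [aux_lintegral_translate (fun z => ρ (γ.toFun z)) a 0 (b - a), zero_add, sub_add_cancel]

lemma subCurve_integralOn {X : Type*} [MetricSpace X] (γ : Curve X) (a b : ℝ)
    (h0 : 0 ≤ a) (hab : a < b) (hbL : b ≤ γ.len)
    (hnc : ∃ x ∈ Icc a b, ∃ y ∈ Icc a b, γ.toFun x ≠ γ.toFun y) (ρ : X → ℝ≥0∞) (s' t' : ℝ) :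
    Curve.integralOn (subCurve γ a b h0 hab hbL hnc) s' t' ρ
      = ∫⁻ r in Icc (s' + a) (t' + a), ρ (γ.toFun r) := by
  show ∫⁻ r in Icc s' t', (fun z => ρ (γ.toFun z)) (r + a) = _
  rw [aux_lintegral_translate (fun z => ρ (γ.toFun z)) a s' t']

lemma aux_main {X : Type*} [MetricSpace X] {V : Type*} [NormedAddCommGroup V]
    (u : X → V) (ρ h : ℕ → X → ℝ≥0∞) (Γ : Set (Curve X))
    (hadm : ∀ γ' ∈ Γ, atTop.liminf (fun i => Curve.integral γ' (h i)) = ⊤)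
    (hbound : ∀ γ' : Curve X, γ' ∉ Γ → ∃ N : Set ℝ, volume N = 0 ∧
      ∀ s t : ℝ, s ∈ Icc (0:ℝ) γ'.len → t ∈ Icc (0:ℝ) γ'.len → s ∉ N → t ∉ N → s < t →
        edist (u (γ'.toFun s)) (u (γ'.toFun t)) ≤
          atTop.liminf fun i => Curve.integralOn γ' s t (ρ i))
    (γ : Curve X) :
    ∃ N : Set ℝ, volume N = 0 ∧
      ∀ s t : ℝ, s ∈ Icc (0:ℝ) γ.len → t ∈ Icc (0:ℝ) γ.len → s ∉ N → t ∉ N → s < t →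
        edist (u (γ.toFun s)) (u (γ.toFun t)) ≤
          atTop.liminf fun i => Curve.integralOn γ s t (fun x => ρ i x + h i x) := by
  classical
  -- upper endpoints: rationals, plus `γ.len` itself
  set ub : Option ℚ → ℝ := fun o => o.elim γ.len (fun q => (q:ℝ)) with hub
  -- the pair `(p, β)` is of class B : the subcurve on `[p, ub β]` is nonconstant and in `Γ`
  set PairB : ℚ → Option ℚ → Prop := fun p β =>
    ∃ (h0 : 0 ≤ (p:ℝ)) (hab : (p:ℝ) < ub β) (hbL : ub β ≤ γ.len)
      (hnc : ∃ x ∈ Icc (p:ℝ) (ub β), ∃ y ∈ Icc (p:ℝ) (ub β), γ.toFun x ≠ γ.toFun y),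
      subCurve γ p (ub β) h0 hab hbL hnc ∈ Γ with hPairB
  have hBtop : ∀ p β, PairB p β →
      atTop.liminf (fun i => ∫⁻ r in Icc (p:ℝ) (ub β), h i (γ.toFun r)) = ⊤ := by
    rintro p β ⟨h0, hab, hbL, hnc, hmem⟩
    have h1 := hadm _ hmem
    have h2 : (fun i => Curve.integral (subCurve γ p (ub β) h0 hab hbL hnc) (h i))
        = fun i => ∫⁻ r in Icc (p:ℝ) (ub β), h i (γ.toFun r) :=
      funext fun i => subCurve_integral γ p (ub β) h0 hab hbL hnc (h i)
    rwa [h2] at h1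
  -- for non-B pairs we get a null set outside which `ρ` bounds increments of `u`
  have main_pair : ∀ (p : ℚ) (β : Option ℚ), ∃ N : Set ℝ, volume N = 0 ∧
      (0 ≤ (p:ℝ) → ub β ≤ γ.len → ¬ PairB p β →
        ∀ x y : ℝ, x ∈ Icc (p:ℝ) (ub β) → y ∈ Icc (p:ℝ) (ub β) → x ∉ N → y ∉ N → x < y →
          edist (u (γ.toFun x)) (u (γ.toFun y)) ≤
            atTop.liminf fun i => ∫⁻ r in Icc x y, ρ i (γ.toFun r)) := by
    intro p β
    by_cases h0 : 0 ≤ (p:ℝ)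
    swap
    · exact ⟨∅, measure_empty, fun h0' _ _ => absurd h0' h0⟩
    by_cases hbL : ub β ≤ γ.len
    swap
    · exact ⟨∅, measure_empty, fun _ hbL' _ => absurd hbL' hbL⟩
    by_cases hab : (p:ℝ) < ub β
    swap
    · refine ⟨∅, measure_empty, fun _ _ _ x y hx hy _ _ hxy => absurd ?_ hab⟩
      exact lt_of_le_of_lt hx.1 (hxy.trans_le hy.2)
    by_cases hconst : ∀ x ∈ Icc (p:ℝ) (ub β), ∀ y ∈ Icc (p:ℝ) (ub β), γ.toFun x = γ.toFun y
    · refine ⟨∅, measure_empty, fun _ _ _ x y hx hy _ _ _ => ?_⟩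
      rw [hconst x hx y hy, edist_self]
      exact zero_le
    push_neg at hconst
    by_cases hmem : subCurve γ p (ub β) h0 hab hbL hconst ∈ Γ
    · exact ⟨∅, measure_empty, fun _ _ hnB =>
        absurd ⟨h0, hab, hbL, hconst, hmem⟩ hnB⟩
    obtain ⟨N', hN'0, hN'⟩ := hbound _ hmem
    refine ⟨{x | x - (p:ℝ) ∈ N'}, aux_null_translate hN'0 _, ?_⟩
    intro _ _ _ x y hxI hyI hxN hyN hxy
    have hx' : x - (p:ℝ) ∈ Icc (0:ℝ) (subCurve γ p (ub β) h0 hab hbL hconst).len :=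
      ⟨sub_nonneg.mpr hxI.1, sub_le_sub_right hxI.2 _⟩
    have hy' : y - (p:ℝ) ∈ Icc (0:ℝ) (subCurve γ p (ub β) h0 hab hbL hconst).len :=
      ⟨sub_nonneg.mpr hyI.1, sub_le_sub_right hyI.2 _⟩
    have h1 := hN' (x - p) (y - p) hx' hy' hxN hyN (by linarith)
    have h2 : (fun i => Curve.integralOn (subCurve γ p (ub β) h0 hab hbL hconst)
        (x - p) (y - p) (ρ i)) = fun i => ∫⁻ r in Icc x y, ρ i (γ.toFun r) := by
      funext i
      rw [subCurve_integralOn, sub_add_cancel, sub_add_cancel]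
    rw [h2] at h1
    have e1 : (subCurve γ p (ub β) h0 hab hbL hconst).toFun (x - p) = γ.toFun x := by
      show γ.toFun (x - p + p) = γ.toFun x
      rw [sub_add_cancel]
    have e2 : (subCurve γ p (ub β) h0 hab hbL hconst).toFun (y - p) = γ.toFun y := by
      show γ.toFun (y - p + p) = γ.toFun y
      rw [sub_add_cancel]
    rwa [e1, e2] at h1
  choose N1 hN10 hN1 using main_pair
  -- critical sets for blow-up at endpoints
  set F : ℚ → ℝ → ℝ≥0∞ := fun b x =>
    atTop.liminf fun i => ∫⁻ r in Icc (max x 0) (b:ℝ), h i (γ.toFun r) with hF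
  set G : ℚ → ℝ → ℝ≥0∞ := fun a y =>
    atTop.liminf fun i => ∫⁻ r in Icc (a:ℝ) (min y γ.len), h i (γ.toFun r) with hG
  set N2 : ℚ → Set ℝ := fun b => {x | (∀ a : ℝ, a < x → F b a = ⊤) ∧ F b x ≠ ⊤} with hN2def
  set N3 : ℚ → Set ℝ := fun a =>
    {y | y ≤ γ.len ∧ (∀ b : ℝ, y < b → b ≤ γ.len → G a b = ⊤) ∧ G a y ≠ ⊤} with hN3def
  have hN20 : ∀ b, volume (N2 b) = 0 := by
    intro b
    refine Set.Subsingleton.measure_zero (fun x hx y hy => ?_) _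
    by_contra hne
    rcases lt_or_gt_of_ne hne with hlt | hlt
    · exact hx.2 (hy.1 x hlt)
    · exact hy.2 (hx.1 y hlt)
  have hN30 : ∀ a, volume (N3 a) = 0 := by
    intro a
    refine Set.Subsingleton.measure_zero (fun x hx y hy => ?_) _
    by_contra hne
    rcases lt_or_gt_of_ne hne with hlt | hlt
    · exact hy.2.2 (hx.2.1 y hlt hy.1)
    · exact hx.2.2 (hy.2.1 x hlt hx.1)
  refine ⟨(⋃ (p : ℚ), ⋃ (β : Option ℚ), N1 p β) ∪ ((⋃ b : ℚ, N2 b) ∪ (⋃ a : ℚ, N3 a)),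
    ?_, ?_⟩
  · refine measure_union_null (measure_iUnion_null fun p => measure_iUnion_null fun β => hN10 p β)
      (measure_union_null (measure_iUnion_null hN20) (measure_iUnion_null hN30))
  set N : Set ℝ := (⋃ (p : ℚ), ⋃ (β : Option ℚ), N1 p β) ∪ ((⋃ b : ℚ, N2 b) ∪ (⋃ a : ℚ, N3 a))
    with hNdef
  intro s t hs ht hsN htN hst
  have hN1N : ∀ p β, N1 p β ⊆ N := fun p β x hx =>
    Or.inl (mem_iUnion.mpr ⟨p, mem_iUnion.mpr ⟨β, hx⟩⟩)
  have hN2N : ∀ b, N2 b ⊆ N := fun b x hx => Or.inr (Or.inl (mem_iUnion.mpr ⟨b, hx⟩))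
  have hN3N : ∀ a, N3 a ⊆ N := fun a x hx => Or.inr (Or.inr (mem_iUnion.mpr ⟨a, hx⟩))
  -- monotone comparison with the goal liminf
  have hR1 : ∀ a b : ℝ, s ≤ a → b ≤ t →
      (atTop.liminf fun i => ∫⁻ r in Icc a b, h i (γ.toFun r)) ≤
        atTop.liminf fun i => Curve.integralOn γ s t (fun x => ρ i x + h i x) := by
    intro a b ha hb
    refine liminf_le_liminf (Eventually.of_forall fun i => ?_)
    calc ∫⁻ r in Icc a b, h i (γ.toFun r) ≤ ∫⁻ r in Icc s t, h i (γ.toFun r) :=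
          lintegral_mono_set (Icc_subset_Icc ha hb)
      _ ≤ ∫⁻ r in Icc s t, (ρ i (γ.toFun r) + h i (γ.toFun r)) :=
          lintegral_mono fun r => le_add_self
      _ = Curve.integralOn γ s t (fun x => ρ i x + h i x) := rfl
  have hR2 : (atTop.liminf fun i => ∫⁻ r in Icc s t, ρ i (γ.toFun r)) ≤
      atTop.liminf fun i => Curve.integralOn γ s t (fun x => ρ i x + h i x) := by
    refine liminf_le_liminf (Eventually.of_forall fun i => ?_)
    exact lintegral_mono fun r => le_self_add
  -- Case I : some B-pair lies inside [s, t]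
  by_cases hI : ∃ (p : ℚ) (β : Option ℚ), s ≤ (p:ℝ) ∧ ub β ≤ t ∧ PairB p β
  · obtain ⟨p, β, hsp, hbt, hB⟩ := hI
    have htop := hBtop p β hB
    have : (⊤ : ℝ≥0∞) ≤ atTop.liminf fun i =>
        Curve.integralOn γ s t (fun x => ρ i x + h i x) := htop ▸ hR1 p (ub β) hsp hbt
    exact le_top.trans this
  -- Case II : every pair around s is of class B
  by_cases hII : ∀ (p : ℚ) (β : Option ℚ),
      0 ≤ (p:ℝ) → (p:ℝ) ≤ s → s < ub β → ub β ≤ γ.len → PairB p β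
  · obtain ⟨b, hsb, hbt⟩ := exists_rat_btwn hst
    have hbub : ub (some b) = (b:ℝ) := rfl
    have hbL' : (b:ℝ) ≤ γ.len := hbt.le.trans ht.2
    have hs0 : 0 < s := by
      rcases hs.1.eq_or_lt with h0 | h0
      · exfalso
        have hB := hII 0 (some b) (by norm_num) (by rw [← h0]; norm_num)
          (by rw [hbub]; exact hsb) (by rw [hbub]; exact hbL')
        exact hI ⟨0, some b, by rw [← h0]; norm_num, by rw [hbub]; exact hbt.le, hB⟩
      · exact h0
    have hFpre : ∀ a : ℝ, a < s → F b a = ⊤ := by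
      intro a ha
      have hmax : max a 0 < s := max_lt ha hs0
      obtain ⟨p, hp1, hp2⟩ := exists_rat_btwn hmax
      have hp0 : 0 ≤ (p:ℝ) := (le_max_right a 0).trans hp1.le
      have hB := hII p (some b) hp0 hp2.le (by rw [hbub]; exact hsb) (by rw [hbub]; exact hbL')
      have htop := hBtop p (some b) hB
      refine top_le_iff.mp ?_
      rw [← htop]
      refine liminf_le_liminf (Eventually.of_forall fun i => ?_)
      exact lintegral_mono_set (Icc_subset_Icc hp1.le le_rfl)
    have hFs : F b s = ⊤ := by
      by_contra hne
      exact hsN (hN2N b ⟨hFpre, hne⟩)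
    have htop : (atTop.liminf fun i => ∫⁻ r in Icc s (b:ℝ), h i (γ.toFun r)) = ⊤ := by
      rw [← hFs, hF]
      simp only [max_eq_left hs.1]
    have : (⊤ : ℝ≥0∞) ≤ atTop.liminf fun i =>
        Curve.integralOn γ s t (fun x => ρ i x + h i x) := htop ▸ hR1 s b le_rfl hbt.le
    exact le_top.trans this
  -- Case III : every pair around t is of class B
  by_cases hIII : ∀ (p : ℚ) (β : Option ℚ),
      0 ≤ (p:ℝ) → (p:ℝ) < t → t ≤ ub β → ub β ≤ γ.len → PairB p β
  · obtain ⟨a, hsa, hat⟩ := exists_rat_btwn hst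
    have h0a : 0 ≤ (a:ℝ) := hs.1.trans hsa.le
    have htL : t < γ.len := by
      rcases ht.2.eq_or_lt with he | hlt
      · exfalso
        have hB := hIII a none h0a hat (by show t ≤ γ.len; exact ht.2) le_rfl
        exact hI ⟨a, none, hsa.le, by show γ.len ≤ t; exact he.ge, hB⟩
      · exact hlt
    have hGpre : ∀ y : ℝ, t < y → y ≤ γ.len → G a y = ⊤ := by
      intro y hty hyL
      obtain ⟨q, hq1, hq2⟩ := exists_rat_btwn hty
      have hB := hIII a (some q) h0a hat hq1.le ((hq2.le).trans hyL)
      have htop := hBtop a (some q) hB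
      refine top_le_iff.mp ?_
      rw [← htop]
      refine liminf_le_liminf (Eventually.of_forall fun i => ?_)
      refine lintegral_mono_set (Icc_subset_Icc le_rfl ?_)
      exact le_min hq2.le ((hq2.le).trans hyL)
    have hGt : G a t = ⊤ := by
      by_contra hne
      exact htN (hN3N a ⟨ht.2, hGpre, hne⟩)
    have htop : (atTop.liminf fun i => ∫⁻ r in Icc (a:ℝ) t, h i (γ.toFun r)) = ⊤ := by
      rw [← hGt, hG]
      simp only [min_eq_left ht.2]
    have : (⊤ : ℝ≥0∞) ≤ atTop.liminf fun i =>
        Curve.integralOn γ s t (fun x => ρ i x + h i x) := htop ▸ hR1 a t hsa.le le_rfl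
    exact le_top.trans this
  -- Case IV : chaining along non-B pairs
  push_neg at hII hIII
  obtain ⟨p₀, β₀, hp₀0, hp₀s, hsβ₀, hβ₀L, hnB₀⟩ := hII
  obtain ⟨p₁, β₁, hp₁0, hp₁t, htβ₁, hβ₁L, hnB₁⟩ := hIII
  set A : Set ℝ := {x | x ∈ Icc s t ∧ x ∉ N ∧
    edist (u (γ.toFun s)) (u (γ.toFun x)) ≤
      atTop.liminf fun i => ∫⁻ r in Icc s x, ρ i (γ.toFun r)} with hA
  have hsA : s ∈ A := ⟨⟨le_rfl, hst.le⟩, hsN, by rw [edist_self]; exact zero_le⟩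
  have hbdd : BddAbove A := ⟨t, fun x hx => hx.1.2⟩
  have hAne : A.Nonempty := ⟨s, hsA⟩
  set c := sSup A with hc
  have hsc : s ≤ c := le_csSup hbdd hsA
  have hct : c ≤ t := csSup_le hAne (fun x hx => hx.1.2)
  have step : ∀ (p : ℚ) (β : Option ℚ), 0 ≤ (p:ℝ) → ub β ≤ γ.len → ¬ PairB p β →
      ∀ x, x ∈ A → x ∈ Icc (p:ℝ) (ub β) → ∀ y, y ∈ Icc (p:ℝ) (ub β) → y ∈ Icc s t →
        y ∉ N → x ≤ y → y ∈ A := by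
    intro p β hp0 hpL hnB x hxA hxI y hyI hyst hyN hxy
    rcases hxy.eq_or_lt with rfl | hxy'
    · exact hxA
    have hxN1 : x ∉ N1 p β := fun hmem => hxA.2.1 (hN1N p β hmem)
    have hyN1 : y ∉ N1 p β := fun hmem => hyN (hN1N p β hmem)
    have hedge := hN1 p β hp0 hpL hnB x y hxI hyI hxN1 hyN1 hxy'
    refine ⟨hyst, hyN, ?_⟩
    calc edist (u (γ.toFun s)) (u (γ.toFun y))
        ≤ edist (u (γ.toFun s)) (u (γ.toFun x)) + edist (u (γ.toFun x)) (u (γ.toFun y)) :=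
          edist_triangle _ _ _
      _ ≤ (atTop.liminf fun i => ∫⁻ r in Icc s x, ρ i (γ.toFun r))
            + (atTop.liminf fun i => ∫⁻ r in Icc x y, ρ i (γ.toFun r)) :=
          add_le_add hxA.2.2 hedge
      _ ≤ atTop.liminf (fun i => (∫⁻ r in Icc s x, ρ i (γ.toFun r))
            + ∫⁻ r in Icc x y, ρ i (γ.toFun r)) := aux_liminf_superadd _ _
      _ = atTop.liminf fun i => ∫⁻ r in Icc s y, ρ i (γ.toFun r) := by
          congr 1
          funext i
          exact aux_lintegral_Icc_add _ hxA.1.1 hxy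
  have hcover : ∀ z, z ∈ Icc s t → z < t →
      ∃ (p : ℚ) (β : Option ℚ), 0 ≤ (p:ℝ) ∧ ub β ≤ γ.len ∧ ¬ PairB p β ∧
        (p:ℝ) ≤ z ∧ z < ub β ∧ ((p:ℝ) < z ∨ (p:ℝ) ≤ s) := by
    intro z hz hzt
    rcases hz.1.eq_or_lt with rfl | hsz
    · exact ⟨p₀, β₀, hp₀0, hβ₀L, hnB₀, hp₀s, hsβ₀, Or.inr hp₀s⟩
    · obtain ⟨p, hp1, hp2⟩ := exists_rat_btwn hsz
      obtain ⟨q, hq1, hq2⟩ := exists_rat_btwn hzt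
      have hp0 : 0 ≤ (p:ℝ) := hs.1.trans hp1.le
      have hqL : ub (some q) ≤ γ.len := by show (q:ℝ) ≤ γ.len; exact hq2.le.trans ht.2
      have hnB : ¬ PairB p (some q) := fun hB => hI ⟨p, some q, hp1.le, hq2.le, hB⟩
      exact ⟨p, some q, hp0, hqL, hnB, hp2.le, hq1, Or.inl hp2⟩
  have hctEq : c = t := by
    by_contra hne
    have hclt : c < t := lt_of_le_of_ne hct hne
    obtain ⟨p, β, hp0, hpL, hnB, hpz, hzβ, hdisj⟩ := hcover c ⟨hsc, hct⟩ hclt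
    have hx : ∃ x ∈ A, (p:ℝ) ≤ x := by
      rcases hdisj with hplt | hpls
      · obtain ⟨x, hxA, hpx⟩ := exists_lt_of_lt_csSup hAne hplt
        exact ⟨x, hxA, hpx.le⟩
      · exact ⟨s, hsA, hpls⟩
    obtain ⟨x, hxA, hpx⟩ := hx
    have hxc : x ≤ c := le_csSup hbdd hxA
    have hcd : c < min (ub β) t := lt_min hzβ hclt
    have hIoo : ¬ (Ioo c (min (ub β) t) ⊆ N) := by
      intro hsub
      have h0 := measure_mono_null hsub (by
        rw [hNdef]
        exact measure_union_null
          (measure_iUnion_null fun p => measure_iUnion_null fun β => hN10 p β)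
          (measure_union_null (measure_iUnion_null hN20) (measure_iUnion_null hN30)))
      rw [Real.volume_Ioo] at h0
      exact (ENNReal.ofReal_pos.mpr (sub_pos.mpr hcd)).ne' h0
    obtain ⟨y, hyIoo, hyN⟩ := not_subset.mp hIoo
    have hyA : y ∈ A := step p β hp0 hpL hnB x hxA ⟨hpx, hxc.trans hzβ.le⟩ y
      ⟨hpx.trans (hxc.trans hyIoo.1.le), hyIoo.2.le.trans (min_le_left _ _)⟩
      ⟨hsc.trans hyIoo.1.le, hyIoo.2.le.trans (min_le_right _ _)⟩
      hyN (hxc.trans hyIoo.1.le)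
    exact absurd (le_csSup hbdd hyA) (not_le.mpr hyIoo.1)
  -- conclude at t
  have hp₁c : (p₁:ℝ) < c := hctEq ▸ hp₁t
  obtain ⟨x, hxA, hpx⟩ := exists_lt_of_lt_csSup hAne hp₁c
  have hxt : x ≤ t := hctEq ▸ le_csSup hbdd hxA
  have htA : t ∈ A := step p₁ β₁ hp₁0 hβ₁L hnB₁ x hxA ⟨hpx.le, hxt.trans htβ₁⟩ t
    ⟨hp₁t.le, htβ₁⟩ ⟨hst.le, le_rfl⟩ htN hxt
  exact htA.2.2.trans hR2


/-- An AM-bounding sequence with uniformly bounded integrals can be approximated in `L¹`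
by strong bounding sequences. -/
theorem statement8 {X : Type*} [MetricSpace X] [MeasurableSpace X] (μ : Measure X)
    {V : Type*} [NormedAddCommGroup V]
    (u : X → V) (ρ : ℕ → X → ℝ≥0∞)
    (hρ : AMBounding μ u ρ)
    (hsup : (⨆ i, ∫⁻ x, ρ i x ∂μ) < ∞) :
    ∀ ε : ℝ, 0 < ε → ∃ g : ℕ → X → ℝ≥0∞, StrongBounding u g ∧
      ∀ i, ∫⁻ x, ((g i x - ρ i x) + (ρ i x - g i x)) ∂μ < ENNReal.ofReal ε := by
  intro ε hε
  obtain ⟨hmeas, Γ, hΓ0, hbound⟩ := hρ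
  obtain ⟨h, hhmeas, hhint, hhadm⟩ := aux_am_null μ hΓ0
    (c := ENNReal.ofReal (ε/2)) (ENNReal.ofReal_pos.mpr (half_pos hε))
  refine ⟨fun i x => ρ i x + h i x, ⟨fun i => (hmeas i).add (hhmeas i), ?_⟩, ?_⟩
  · intro γ
    have hbound' : ∀ γ' : Curve X, γ' ∉ Γ → ∃ N : Set ℝ, volume N = 0 ∧
        ∀ s t : ℝ, s ∈ Set.Icc (0:ℝ) γ'.len → t ∈ Set.Icc (0:ℝ) γ'.len → s ∉ N → t ∉ N →
          s < t → edist (u (γ'.toFun s)) (u (γ'.toFun t)) ≤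
            Filter.atTop.liminf fun i => Curve.integralOn γ' s t (ρ i) :=
      fun γ' hγ' => hbound γ' hγ' (fun r _ => Set.mem_univ _)
    exact aux_main u ρ h Γ hhadm hbound' γ
  · intro i
    have hle : ∀ x, ((ρ i x + h i x) - ρ i x) + (ρ i x - (ρ i x + h i x)) ≤ h i x := by
      intro x
      have h1 : (ρ i x + h i x) - ρ i x ≤ h i x :=
        tsub_le_iff_right.mpr (le_of_eq (add_comm _ _))
      have h2 : ρ i x - (ρ i x + h i x) = 0 := tsub_eq_zero_of_le le_self_add
      rw [h2, add_zero]
      exact h1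
    calc ∫⁻ x, (((fun i x => ρ i x + h i x) i x - ρ i x)
          + (ρ i x - (fun i x => ρ i x + h i x) i x)) ∂μ
        ≤ ∫⁻ x, h i x ∂μ := lintegral_mono hle
      _ ≤ ENNReal.ofReal (ε/2) := hhint i
      _ < ENNReal.ofReal ε := (ENNReal.ofReal_lt_ofReal_iff hε).mpr (half_lt_self hε)


end BVAMPaper
end
end

section
/- Let u : X → Y be measurable, Y a complete separable metric space. The following are equivalent: (a) there exists a sequence (ρ_i) of nonnegative Borel functions with sup_i ∫_X ρ_i dμ < ∞ bounding d_Y(u(γ(s)), u(γ(t))) ≤ liminf_i ∫_{γ|[s,t]} ρ_i ds along AM-a.e. curve outside an H¹-null parameter set; (b) for every Banach space V and isometric embedding Φ : Y → V, Φ∘u ∈ BV_AM(X:V); (c) there exists some Banach space V and isometric embedding Φ : Y → V with Φ∘u ∈ BV_AM(X:V). Moreover, in this case ‖D_AM(Φ∘u)‖(X) equals the infimum over all sequences satisfying (a) of liminf_i ∫_X ρ_i dμ. -/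
open MeasureTheory Filter Set Metric
open scoped ENNReal NNReal Topology

noncomputable section

namespace BVAMPaper

variable {X : Type*} [MetricSpace X]

variable [MeasurableSpace X]

section Helpers

variable {X : Type*} [MetricSpace X] [MeasurableSpace X] {μ : Measure X}

private lemma liminf_le_liminf_comp (f : ℕ → ℝ≥0∞) {φ : ℕ → ℕ} (hφ : StrictMono φ) :
    atTop.liminf f ≤ atTop.liminf (fun i => f (φ i)) := by
  have h1 : Filter.map φ atTop ≤ atTop := hφ.tendsto_atTop
  calc atTop.liminf f ≤ (Filter.map φ atTop).liminf f := liminf_le_liminf_of_le h1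
    _ = atTop.liminf (fun i => f (φ i)) := by
        rw [Filter.liminf_eq, Filter.liminf_eq]
        simp [Filter.eventually_map]

/-- AM-bounding sequences are preserved by post-composition with an isometry. -/
private lemma amBounding_comp_iff {Y : Type*} [EMetricSpace Y] {V : Type*} [EMetricSpace V]
    {Φ : Y → V} (hΦ : Isometry Φ) {u : X → Y} {ρ : ℕ → X → ℝ≥0∞} :
    AMBounding μ (Φ ∘ u) ρ ↔ AMBounding μ u ρ := by
  unfold AMBounding AMBoundingOn
  simp only [Function.comp_apply, hΦ.edist_eq]

/-- AM-bounding sequences pass to subsequences. -/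
private lemma amBounding_comp_subseq {Y : Type*} [EMetricSpace Y] {u : X → Y}
    {ρ : ℕ → X → ℝ≥0∞} (h : AMBounding μ u ρ) {φ : ℕ → ℕ} (hφ : StrictMono φ) :
    AMBounding μ u (fun i => ρ (φ i)) := by
  obtain ⟨hmeas, Γ, hΓ, hΓ'⟩ := h
  refine ⟨fun i => hmeas (φ i), Γ, hΓ, fun γ hγ hU => ?_⟩
  obtain ⟨N, hN, hN'⟩ := hΓ' γ hγ hU
  refine ⟨N, hN, fun s t hs ht hsN htN hst => ?_⟩
  exact (hN' s t hs ht hsN htN hst).trans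
    (liminf_le_liminf_comp (fun i => Curve.integralOn γ s t (ρ i)) hφ)

/-- From an AM-bounding sequence with finite liminf of integrals, extract one with
uniformly bounded integrals and liminf at most any prescribed value above the liminf. -/
private lemma amBounding_extract {Y : Type*} [EMetricSpace Y] {u : X → Y}
    {ρ : ℕ → X → ℝ≥0∞} (h : AMBounding μ u ρ) {L : ℝ≥0∞}
    (hL : (atTop.liminf fun i => ∫⁻ x, ρ i x ∂μ) < L) :
    ∃ σ : ℕ → X → ℝ≥0∞, AMBounding μ u σ ∧ (⨆ i, ∫⁻ x, σ i x ∂μ) ≤ L ∧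
      (atTop.liminf fun i => ∫⁻ x, σ i x ∂μ) ≤ L := by
  have hfreq : ∃ᶠ i in atTop, (∫⁻ x, ρ i x ∂μ) ≤ L := by
    by_contra hc
    rw [Filter.not_frequently] at hc
    have : L ≤ atTop.liminf fun i => ∫⁻ x, ρ i x ∂μ := by
      refine Filter.le_liminf_of_le (by isBoundedDefault) ?_
      filter_upwards [hc] with i hi
      exact le_of_not_ge hi
    exact absurd hL (not_lt.2 this)
  obtain ⟨φ, hφ, hφL⟩ := Filter.extraction_of_frequently_atTop hfreq
  refine ⟨fun i => ρ (φ i), amBounding_comp_subseq h hφ, iSup_le fun i => hφL i, ?_⟩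
  exact (Filter.liminf_le_of_frequently_le' (Filter.Frequently.of_forall hφL))

end Helpers


private lemma bwd_aux {X : Type*} [MetricSpace X] [MeasurableSpace X] {μ : Measure X}
    {Y : Type*} [EMetricSpace Y] {u : X → Y} {V : Type*} [EMetricSpace V] {Φ : Y → V}
    (hΦ : Isometry Φ) {ρ : ℕ → X → ℝ≥0∞} (hρ : AMBounding μ (Φ ∘ u) ρ)
    (hlim : (Filter.atTop.liminf fun i => ∫⁻ x, ρ i x ∂μ) < ∞) :
    ∃ σ : ℕ → X → ℝ≥0∞, AMBounding μ u σ ∧ (⨆ i, ∫⁻ x, σ i x ∂μ) < ∞ := by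
  have hρ' : AMBounding μ u ρ := (amBounding_comp_iff hΦ).1 hρ
  have hLlt : (Filter.atTop.liminf fun i => ∫⁻ x, ρ i x ∂μ) <
      (Filter.atTop.liminf fun i => ∫⁻ x, ρ i x ∂μ) + 1 :=
    ENNReal.lt_add_right hlim.ne one_ne_zero
  obtain ⟨σ, hσ, hσsup, _⟩ := amBounding_extract hρ' hLlt
  exact ⟨σ, hσ, lt_of_le_of_lt hσsup (ENNReal.add_lt_top.2 ⟨hlim, ENNReal.one_lt_top⟩)⟩

/-- `u` post-composed with some isometric embedding into a Banach space is `BV_AM` iff this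
holds for every such embedding iff `u` admits an intrinsic AM-bounding sequence with uniformly
bounded integrals; moreover the energies agree. -/
theorem statement11 {X : Type*} [MetricSpace X] [MeasurableSpace X] (μ : Measure X)
    {Y : Type} [MetricSpace Y] [CompleteSpace Y] [TopologicalSpace.SeparableSpace Y]
    (u : X → Y) :
    ((∃ ρ : ℕ → X → ℝ≥0∞, AMBounding μ u ρ ∧ (⨆ i, ∫⁻ x, ρ i x ∂μ) < ∞) ↔
      (∀ (V : Type) [NormedAddCommGroup V], ∀ Φ : Y → V, Isometry Φ →
        ∃ ρ : ℕ → X → ℝ≥0∞, AMBounding μ (Φ ∘ u) ρ ∧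
          (Filter.atTop.liminf fun i => ∫⁻ x, ρ i x ∂μ) < ∞)) ∧
    ((∀ (V : Type) [NormedAddCommGroup V], ∀ Φ : Y → V, Isometry Φ →
        ∃ ρ : ℕ → X → ℝ≥0∞, AMBounding μ (Φ ∘ u) ρ ∧
          (Filter.atTop.liminf fun i => ∫⁻ x, ρ i x ∂μ) < ∞) ↔
      (∃ (V : Type) (iV : NormedAddCommGroup V) (Φ : Y → V),
        @Isometry Y V _ (iV.toMetricSpace.toPseudoMetricSpace.toPseudoEMetricSpace) Φ ∧
        ∃ ρ : ℕ → X → ℝ≥0∞,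
          @AMBounding X _ _ V (@MetricSpace.toEMetricSpace V iV.toMetricSpace)
            μ (Φ ∘ u) ρ ∧
          (Filter.atTop.liminf fun i => ∫⁻ x, ρ i x ∂μ) < ∞)) ∧
    (∀ (V : Type) [NormedAddCommGroup V], ∀ Φ : Y → V, Isometry Φ →
      DAM μ (Φ ∘ u) =
        ⨅ (ρ : ℕ → X → ℝ≥0∞)
          (_ : AMBounding μ u ρ ∧ (⨆ i, ∫⁻ x, ρ i x ∂μ) < ∞),
          Filter.atTop.liminf fun i => ∫⁻ x, ρ i x ∂μ) := by
  -- (a) → (b)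
  have fwd : (∃ ρ : ℕ → X → ℝ≥0∞, AMBounding μ u ρ ∧ (⨆ i, ∫⁻ x, ρ i x ∂μ) < ∞) →
      ∀ (V : Type) [NormedAddCommGroup V], ∀ Φ : Y → V, Isometry Φ →
        ∃ ρ : ℕ → X → ℝ≥0∞, AMBounding μ (Φ ∘ u) ρ ∧
          (Filter.atTop.liminf fun i => ∫⁻ x, ρ i x ∂μ) < ∞ := by
    rintro ⟨ρ, hρ, hsup⟩ V _ Φ hΦ
    refine ⟨ρ, (amBounding_comp_iff hΦ).2 hρ, lt_of_le_of_lt ?_ hsup⟩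
    exact Filter.liminf_le_of_frequently_le'
      (Filter.Frequently.of_forall fun i => le_iSup (fun i => ∫⁻ x, ρ i x ∂μ) i)
  refine ⟨⟨fwd, ?_⟩, ⟨?_, ?_⟩, ?_⟩
  · -- (b) → (a) via Kuratowski embedding
    intro h
    obtain ⟨ρ, hρ, hlim⟩ := h (lp (fun _ : ℕ => ℝ) ∞) (kuratowskiEmbedding Y)
      (kuratowskiEmbedding.isometry Y)
    exact bwd_aux (kuratowskiEmbedding.isometry Y) hρ hlim
  · -- (b) → (c)
    intro h
    obtain ⟨ρ, hρ, hlim⟩ := h (lp (fun _ : ℕ => ℝ) ∞) (kuratowskiEmbedding Y)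
      (kuratowskiEmbedding.isometry Y)
    exact ⟨lp (fun _ : ℕ => ℝ) ∞, inferInstance, kuratowskiEmbedding Y,
      kuratowskiEmbedding.isometry Y, ρ, hρ, hlim⟩
  · -- (c) → (b)
    rintro ⟨V, iV, Φ, hΦ, ρ, hρ, hlim⟩
    letI := iV
    exact fwd (bwd_aux (V := V) hΦ hρ hlim)
  · -- energy identity
    intro V _ Φ hΦ
    have hDAM : DAM μ (Φ ∘ u) = ⨅ (ρ : ℕ → X → ℝ≥0∞) (_ : AMBounding μ (Φ ∘ u) ρ),
        Filter.atTop.liminf fun i => ∫⁻ x, ρ i x ∂μ := by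
      simp only [DAM, DAMOn, AMBounding, Measure.restrict_univ]
    rw [hDAM]
    apply le_antisymm
    · refine le_iInf₂ fun ρ hρ => ?_
      exact iInf₂_le ρ ((amBounding_comp_iff hΦ).2 hρ.1)
    · refine le_iInf₂ fun ρ hρΦ => ?_
      have hρ : AMBounding μ u ρ := (amBounding_comp_iff hΦ).1 hρΦ
      set L := Filter.atTop.liminf fun i => ∫⁻ x, ρ i x ∂μ with hLdef
      refine ENNReal.le_of_forall_pos_le_add fun ε hε hLtop => ?_
      have hLlt : L < L + ε := ENNReal.lt_add_right hLtop.ne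
        (by exact_mod_cast hε.ne')
      obtain ⟨σ, hσ, hσsup, hσlim⟩ := amBounding_extract hρ hLlt
      have hfin : (⨆ i, ∫⁻ x, σ i x ∂μ) < ∞ :=
        lt_of_le_of_lt hσsup (ENNReal.add_lt_top.2 ⟨hLtop, ENNReal.coe_lt_top⟩)
      exact le_trans (iInf₂_le σ ⟨hσ, hfin⟩) hσlim

end BVAMPaper
end
end
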